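/- For integers m ≥ 1, real x with |x| < 1, and 0 < t < 1, one has Li_{1,…,1}^{(x)}(t) (m ones) = ∑_{j=0}^{m} (−1)^{m−j} I_{m−j}(t) · (−log(1−t))^j / j!, where I_l(t) = ∫_{0<u₁<⋯<u_l<t} du₁/(1−u₁) ⋯ du_{l-1}/(1−u_{l-1}) · (1−u_l^x)/(1−u_l) du_l (and I_0(t) = 1), and Li_{1,…,1}^{(x)}(t) = ∑_{0<m₁<⋯<m_m} t^{m_m+x}/((m₁+x)⋯(m_m+x)). -/

import Mathlib

open Set MeasureTheory intervalIntegral Real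


/-- Iterated integral of du/(1−u) repeated j times from 0 to t:
K j t = ∫_{0<u₁<⋯<u_j<t} ∏ du_i/(1−u_i). -/
noncomputable def Kiter : ℕ → ℝ → ℝ
  | 0, _ => 1
  | (j + 1), t => ∫ u in (0 : ℝ)..t, Kiter j u / (1 - u)


lemma hasDerivAt_negLog {u : ℝ} (hu : u < 1) :
    HasDerivAt (fun v : ℝ => -Real.log (1 - v)) ((1 - u)⁻¹) u := by
  have h1 : HasDerivAt (fun v : ℝ => 1 - v) (-1) u := (hasDerivAt_id u).const_sub 1
  have h2 := (h1.log (by linarith)).neg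
  refine h2.congr_deriv ?_
  rw [neg_div, neg_neg, one_div]

lemma contOn_negLog : ContinuousOn (fun v : ℝ => -Real.log (1 - v)) (Iio 1) := by
  exact (((continuous_const.sub continuous_id).continuousOn).log
    (fun v hv => by simp only [mem_Iio] at hv; intro h; have h' : (1:ℝ) - v = 0 := h; linarith)).neg

lemma contOn_inv_sub : ContinuousOn (fun v : ℝ => (1 - v)⁻¹) (Iio 1) := by
  exact ((continuous_const.sub continuous_id).continuousOn).inv₀
    (fun v hv => by simp only [Set.mem_Iio] at hv; exact ne_of_gt (show (0:ℝ) < 1 - v by linarith))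

lemma Kiter_eq (j : ℕ) : ∀ t : ℝ, 0 ≤ t → t < 1 →
    Kiter j t = (-Real.log (1 - t)) ^ j / (Nat.factorial j) := by
  induction j with
  | zero => intro t _ _; simp [Kiter]
  | succ j ih =>
    intro t h0 h1
    have hsub : Set.uIcc (0:ℝ) t ⊆ Iio 1 := by
      rw [Set.uIcc_of_le h0]; exact fun u hu => lt_of_le_of_lt hu.2 h1
    show (∫ u in (0:ℝ)..t, Kiter j u / (1 - u)) = _
    rw [intervalIntegral.integral_congr (g := fun u =>
        ((-Real.log (1 - u)) ^ j / (Nat.factorial j)) * (1 - u)⁻¹)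
      (fun u hu => by
        rw [Set.uIcc_of_le h0] at hu
        rw [ih u hu.1 (lt_of_le_of_lt hu.2 h1), div_eq_mul_inv])]
    rw [intervalIntegral.integral_eq_sub_of_hasDerivAt (f := fun v =>
        (-Real.log (1 - v)) ^ (j+1) / (Nat.factorial (j+1)))
        (f' := fun u => (-Real.log (1 - u)) ^ j / (Nat.factorial j) * (1 - u)⁻¹)
      (fun u hu => by
        have h := ((hasDerivAt_negLog (hsub hu)).pow (j+1)).div_const
          ((Nat.factorial (j+1) : ℝ))
        refine h.congr_deriv (Eq.symm ?_)
        have hfac : (Nat.factorial (j+1) : ℝ) = ((j:ℝ)+1) * Nat.factorial j := by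
          rw [Nat.factorial_succ]; push_cast; ring
        rw [hfac, Nat.add_sub_cancel]
        push_cast
        rw [mul_assoc ((j:ℝ)+1), mul_div_mul_left _ _ (by positivity : ((j:ℝ)+1) ≠ 0), div_mul_eq_mul_div])
      (((((contOn_negLog.mono hsub).pow j).div_const _).mul
        (contOn_inv_sub.mono hsub)).intervalIntegrable)]
    simp [Real.log_one]

/-- I_l(t) = ∫_{0<u₁<⋯<u_l<t} du₁/(1−u₁)⋯du_{l−1}/(1−u_{l−1}) · (1−u_l^x)/(1−u_l) du_l,
with I_0(t) = 1. -/
noncomputable def Ix (x : ℝ) : ℕ → ℝ → ℝ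
  | 0, _ => 1
  | (l + 1), t => ∫ u in (0 : ℝ)..t, Kiter l u * ((1 - u ^ x) / (1 - u))


variable {x : ℝ}

lemma Kiter_contOn (j : ℕ) {b : ℝ} (h0 : 0 ≤ b) (hb : b < 1) :
    ContinuousOn (Kiter j) (Icc 0 b) := by
  have hsub : Icc (0:ℝ) b ⊆ Iio 1 := fun u hu => lt_of_le_of_lt hu.2 hb
  exact (((contOn_negLog.mono hsub).pow j).div_const _).congr
    (fun u hu => Kiter_eq j u hu.1 (hsub hu))

lemma q_intervalIntegrable (hx1 : -1 < x) (l : ℕ) {b : ℝ} (h0 : 0 ≤ b) (hb : b < 1) :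
    IntervalIntegrable (fun u => Kiter l u * ((1 - u ^ x) / (1 - u))) volume 0 b := by
  have huicc : Set.uIcc (0:ℝ) b = Icc 0 b := Set.uIcc_of_le h0
  have hsub : Icc (0:ℝ) b ⊆ Iio 1 := fun u hu => lt_of_le_of_lt hu.2 hb
  have hK : ContinuousOn (fun u => Kiter l u * (1 - u)⁻¹) (Set.uIcc 0 b) := by
    rw [huicc]
    exact (Kiter_contOn l h0 hb).mul (contOn_inv_sub.mono hsub)
  have heq : (fun u : ℝ => Kiter l u * ((1 - u ^ x) / (1 - u)))
      = fun u => (Kiter l u * (1 - u)⁻¹) - (u ^ x) * (Kiter l u * (1 - u)⁻¹) := by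
    funext u; rw [div_eq_mul_inv]; ring
  rw [heq]
  exact (hK.intervalIntegrable).sub
    ((intervalIntegral.intervalIntegrable_rpow' hx1).mul_continuousOn hK)

lemma Ix_contOn (hx1 : -1 < x) (l : ℕ) {b : ℝ} (h0 : 0 ≤ b) (hb : b < 1) :
    ContinuousOn (Ix x l) (Icc 0 b) := by
  cases l with
  | zero => exact (continuousOn_const (c := (1:ℝ))).congr (fun u _ => by simp [Ix])
  | succ l =>
    have hint := q_intervalIntegrable hx1 l h0 hb
    rw [intervalIntegrable_iff_integrableOn_Ioc_of_le h0] at hint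
    have h := intervalIntegral.continuousOn_primitive_interval (a := 0) (b := b)
      (f := fun u => Kiter l u * ((1 - u ^ x) / (1 - u))) (μ := volume)
      (by rw [Set.uIcc_of_le h0, integrableOn_Icc_iff_integrableOn_Ioc]; exact hint)
    rw [Set.uIcc_of_le h0] at h
    exact h.congr (fun u _ => by simp [Ix])

lemma q_contOn_Ioo (hx1 : -1 < x) (l : ℕ) :
    ContinuousOn (fun u => Kiter l u * ((1 - u ^ x) / (1 - u))) (Ioo (0:ℝ) 1) := by
  have hK : ContinuousOn (Kiter l) (Ioo (0:ℝ) 1) :=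
    (((contOn_negLog.mono (fun u hu => hu.2)).pow l).div_const _).congr
      (fun u hu => Kiter_eq l u hu.1.le hu.2)
  apply hK.mul
  apply ContinuousOn.div
  · exact continuousOn_const.sub (fun u hu =>
      (Real.continuousAt_rpow_const u x (Or.inl (ne_of_gt hu.1))).continuousWithinAt)
  · exact (continuous_const.sub continuous_id).continuousOn
  · intro u hu; exact ne_of_gt (by linarith [hu.2])

lemma Ix_hasDerivAt (hx1 : -1 < x) (l : ℕ) {u : ℝ} (hu : u ∈ Ioo (0:ℝ) 1) :
    HasDerivAt (Ix x (l+1)) (Kiter l u * ((1 - u ^ x) / (1 - u))) u := by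
  have hc := q_contOn_Ioo hx1 l
  have h := intervalIntegral.integral_hasDerivAt_right
    (q_intervalIntegrable hx1 l hu.1.le hu.2)
    ((hc.stronglyMeasurableAtFilter isOpen_Ioo) u hu)
    (hc.continuousAt (isOpen_Ioo.mem_nhds hu))
  have heq : Ix x (l+1) = fun t => ∫ u in (0:ℝ)..t, Kiter l u * ((1 - u ^ x) / (1 - u)) := by
    rfl
  rw [heq]
  exact h


noncomputable def RHSf (x : ℝ) (m : ℕ) (t : ℝ) : ℝ :=
  ∑ j ∈ Finset.range (m + 1),
    (-1 : ℝ) ^ (m - j) * Ix x (m - j) t * (-Real.log (1 - t)) ^ j / (Nat.factorial j)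

lemma Ix_hasDerivAt' (hx1 : -1 < x) (k : ℕ) {u : ℝ} (hu : u ∈ Ioo (0:ℝ) 1) :
    HasDerivAt (fun t => Ix x k t)
      (if k = 0 then 0 else Kiter (k-1) u * ((1 - u ^ x) / (1 - u))) u := by
  cases k with
  | zero => rw [if_pos rfl]; exact hasDerivAt_const u (1:ℝ)
  | succ k =>
    rw [if_neg (Nat.succ_ne_zero k), Nat.succ_sub_one]
    exact Ix_hasDerivAt hx1 k hu

lemma helper_div (c I aj v jf jp : ℝ) (hjp : jp ≠ 0) (hjf : jf ≠ 0) :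
    c * I * (jp * aj * v) / (jp * jf) = c * I * aj / jf * v := by
  field_simp

lemma RHSf_hasDerivAt (hx1 : -1 < x) (m : ℕ) (hm : 1 ≤ m) {u : ℝ} (hu : u ∈ Ioo (0:ℝ) 1) :
    HasDerivAt (RHSf x (m+1)) (RHSf x m u / (1 - u)) u := by
  have hL : HasDerivAt (fun v : ℝ => -Real.log (1 - v)) ((1 - u)⁻¹) u := hasDerivAt_negLog hu.2
  set DI : ℕ → ℝ := fun k => if k = 0 then 0 else Kiter (k-1) u * ((1 - u ^ x) / (1 - u))
    with hDI
  set A : ℕ → ℝ := fun j => (-1:ℝ)^(m+1-j) * DI (m+1-j) * (-Real.log (1-u)) ^ j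
      / (Nat.factorial j) with hA_def
  set B : ℕ → ℝ := fun j => (-1:ℝ)^(m+1-j) * Ix x (m+1-j) u
      * ((j:ℝ) * (-Real.log (1-u))^(j-1) * (1-u)⁻¹) / (Nat.factorial j) with hB_def
  have hterm : ∀ j ∈ Finset.range (m+2), HasDerivAt
      (fun t => (-1:ℝ) ^ (m+1-j) * Ix x (m+1-j) t * (-Real.log (1-t)) ^ j / (Nat.factorial j))
      (A j + B j) u := by
    intro j _
    have h1 := (((Ix_hasDerivAt' hx1 (m+1-j) hu).const_mul ((-1:ℝ)^(m+1-j))).mul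
      (hL.pow j)).div_const ((Nat.factorial j : ℝ))
    refine h1.congr_deriv (Eq.symm ?_)
    rw [hA_def, hB_def]
    simp only []
    rw [← add_div]
    rfl
  have hsum := HasDerivAt.fun_sum hterm
  have hRH : RHSf x (m+1) = fun t => ∑ j ∈ Finset.range (m+2),
      ((-1:ℝ)^(m+1-j) * Ix x (m+1-j) t * (-Real.log (1-t))^j / (Nat.factorial j)) := rfl
  rw [hRH]
  suffices heq : ∑ j ∈ Finset.range (m+2), (A j + B j) = RHSf x m u / (1 - u) by
    rw [← heq]; exact hsum
  rw [Finset.sum_add_distrib]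
  have hB : ∑ j ∈ Finset.range (m+2), B j = RHSf x m u * (1-u)⁻¹ := by
    rw [Finset.sum_range_succ']
    have hB0 : B 0 = 0 := by rw [hB_def]; simp
    rw [hB0, add_zero]
    have hRm : RHSf x m u = ∑ j ∈ Finset.range (m+1),
        (-1:ℝ)^(m-j) * Ix x (m-j) u * (-Real.log (1-u))^j / (Nat.factorial j) := rfl
    rw [hRm, Finset.sum_mul]
    apply Finset.sum_congr rfl
    intro j _
    rw [hB_def]
    simp only []
    rw [show m + 1 - (j+1) = m - j by omega, Nat.add_sub_cancel, Nat.factorial_succ]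
    have hj0 : ((j:ℝ)+1) ≠ 0 := by positivity
    have hjf : ((Nat.factorial j : ℝ)) ≠ 0 := Nat.cast_ne_zero.mpr (Nat.factorial_ne_zero j)
    push_cast
    exact helper_div _ _ _ _ _ _ hj0 hjf
  have hA : ∑ j ∈ Finset.range (m+2), A j = 0 := by
    rw [Finset.sum_range_succ]
    have hAl : A (m+1) = 0 := by
      rw [hA_def]; simp only [Nat.sub_self]
      rw [hDI]; simp
    rw [hAl, add_zero]
    have hKe : ∀ j ∈ Finset.range (m+1), A j
        = (-(((1 - u ^ x) / (1 - u)) * (-Real.log (1-u))^m * (-1:ℝ)^m / (Nat.factorial m)))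
          * ((-1:ℝ)^j * (Nat.choose m j)) := by
      intro j hj
      have hjm : j ≤ m := Nat.lt_succ_iff.mp (Finset.mem_range.mp hj)
      have hDIv : DI (m - j + 1) = ((-Real.log (1-u))^(m-j) / (Nat.factorial (m-j)))
          * ((1 - u ^ x) / (1 - u)) := by
        rw [hDI]
        simp only [if_neg (Nat.succ_ne_zero _), Nat.succ_sub_one]
        rw [Kiter_eq (m-j) u hu.1.le hu.2]
      have hs2 : ((-1:ℝ))^(m-j) * (-1:ℝ)^j = (-1:ℝ)^m := by
        rw [← pow_add, Nat.sub_add_cancel hjm]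
      have hsq : ((-1:ℝ)^j) * ((-1:ℝ)^j) = 1 := by
        rw [← pow_add]; exact Even.neg_one_pow ⟨j, rfl⟩
      have hs3 : ((-1:ℝ))^(m-j) = (-1:ℝ)^m * (-1:ℝ)^j := by
        rw [← hs2, mul_assoc, hsq, mul_one]
      have hpow : (-Real.log (1-u))^(m-j) * (-Real.log (1-u))^j = (-Real.log (1-u))^m := by
        rw [← pow_add, Nat.sub_add_cancel hjm]
      have hcf : ((Nat.choose m j : ℝ)) * (Nat.factorial j) * (Nat.factorial (m-j))
          = (Nat.factorial m) := by
        exact_mod_cast congrArg (Nat.cast (R := ℝ)) (Nat.choose_mul_factorial_mul_factorial hjm)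
      rw [hA_def]
      simp only []
      rw [show m + 1 - j = (m - j) + 1 by omega, hDIv, ← hpow, ← hcf, pow_succ, hs3]
      have hC : ((Nat.choose m j : ℝ)) ≠ 0 :=
        Nat.cast_ne_zero.mpr (Nat.choose_pos hjm).ne'
      have hjf : ((Nat.factorial j : ℝ)) ≠ 0 := Nat.cast_ne_zero.mpr (Nat.factorial_ne_zero j)
      have hjf2 : ((Nat.factorial (m-j) : ℝ)) ≠ 0 := Nat.cast_ne_zero.mpr (Nat.factorial_ne_zero _)
      generalize (1 - u ^ x) / (1 - u) = w
      generalize (-Real.log (1-u))^(m-j) = P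
      generalize (-Real.log (1-u))^j = Q
      generalize (-1:ℝ)^m = em
      generalize (-1:ℝ)^j = ej
      field_simp
    rw [Finset.sum_congr rfl hKe, ← Finset.mul_sum]
    have halt : ∑ j ∈ Finset.range (m+1), ((-1:ℝ)^j * (Nat.choose m j)) = 0 := by
      have h := Int.alternating_sum_range_choose (n := m)
      rw [if_neg (by omega : m ≠ 0)] at h
      have h2 := congrArg (fun z : ℤ => (z : ℝ)) h
      push_cast at h2
      simpa using h2
    rw [halt, mul_zero]
  rw [hA, hB, zero_add, div_eq_mul_inv]

lemma RHSf_zero (m : ℕ) (hm : 1 ≤ m) : RHSf x m 0 = 0 := by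
  have hterm : ∀ j ∈ Finset.range (m+1),
      (-1:ℝ)^(m-j) * Ix x (m-j) 0 * (-Real.log (1-0))^j / (Nat.factorial j) = 0 := by
    intro j hj
    by_cases hjm : j = m
    · rw [hjm, sub_zero, Real.log_one, neg_zero, zero_pow (show m ≠ 0 by omega)]
      ring
    · have hj1 : m - j ≠ 0 := by have := Finset.mem_range.mp hj; omega
      obtain ⟨k, hk⟩ := Nat.exists_eq_succ_of_ne_zero hj1
      rw [hk]
      have hI : Ix x (k+1) 0 = 0 := by
        have : Ix x (k+1) 0 = ∫ u in (0:ℝ)..(0:ℝ), Kiter k u * ((1 - u ^ x) / (1 - u)) := rfl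
        rw [this, intervalIntegral.integral_same]
      rw [hI]; ring
  exact Finset.sum_eq_zero hterm

lemma RHSf_cont (hx1 : -1 < x) (m : ℕ) {b : ℝ} (h0 : 0 ≤ b) (hb : b < 1) :
    ContinuousOn (RHSf x m) (Icc 0 b) := by
  have hsub : Icc (0:ℝ) b ⊆ Iio 1 := fun u hu => lt_of_le_of_lt hu.2 hb
  have : RHSf x m = fun t => ∑ j ∈ Finset.range (m+1),
      (-1:ℝ)^(m-j) * Ix x (m-j) t * (-Real.log (1-t))^j / (Nat.factorial j) := rfl
  rw [this]
  apply continuousOn_finset_sum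
  intro j _
  exact ((continuousOn_const.mul (Ix_contOn hx1 _ h0 hb)).mul
    ((contOn_negLog.mono hsub).pow j)).div_const _

lemma RHSf_rec (hx1 : -1 < x) (m : ℕ) (hm : 1 ≤ m) {t : ℝ} (h0 : 0 ≤ t) (h1 : t < 1) :
    RHSf x (m+1) t = ∫ u in (0:ℝ)..t, RHSf x m u / (1 - u) := by
  have hsub : Icc (0:ℝ) t ⊆ Iio 1 := fun u hu => lt_of_le_of_lt hu.2 h1
  have hint : IntervalIntegrable (fun u => RHSf x m u / (1-u)) volume 0 t := by
    apply ContinuousOn.intervalIntegrable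
    rw [Set.uIcc_of_le h0]
    exact (RHSf_cont hx1 m h0 h1).div ((continuous_const.sub continuous_id).continuousOn)
      (fun u hu => by have h' : u < 1 := Set.mem_Iio.mp (hsub hu); exact ne_of_gt (by linarith))
  have hftc := intervalIntegral.integral_eq_sub_of_hasDeriv_right_of_le h0
    (RHSf_cont hx1 (m+1) h0 h1)
    (fun u hu => (RHSf_hasDerivAt hx1 m hm
      (⟨hu.1, lt_trans hu.2 h1⟩ : u ∈ Ioo (0:ℝ) 1)).hasDerivWithinAt)
    hint
  rw [hftc, RHSf_zero (m+1) (by omega), sub_zero]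

lemma RHSf_one (hx1 : -1 < x) {t : ℝ} (h0 : 0 ≤ t) (h1 : t < 1) :
    RHSf x 1 t = ∫ u in (0:ℝ)..t, u ^ x / (1 - u) := by
  have hsub : Icc (0:ℝ) t ⊆ Iio 1 := fun u hu => lt_of_le_of_lt hu.2 h1
  have hsub' : Set.uIcc (0:ℝ) t ⊆ Iio 1 := by rw [Set.uIcc_of_le h0]; exact hsub
  have hintInv : IntervalIntegrable (fun u : ℝ => (1-u)⁻¹) volume 0 t :=
    (contOn_inv_sub.mono hsub').intervalIntegrable
  have hintq : IntervalIntegrable (fun u => Kiter 0 u * ((1 - u ^ x) / (1 - u))) volume 0 t :=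
    q_intervalIntegrable hx1 0 h0 h1
  have hlog : -Real.log (1-t) = ∫ u in (0:ℝ)..t, (1-u)⁻¹ := by
    rw [intervalIntegral.integral_eq_sub_of_hasDerivAt
      (fun u hu => hasDerivAt_negLog (hsub' hu))
      hintInv]
    simp
  have h2 : RHSf x 1 t = -Ix x 1 t + (-Real.log (1-t)) := by
    have hr : RHSf x 1 t = ∑ j ∈ Finset.range 2,
        (-1:ℝ)^(1-j) * Ix x (1-j) t * (-Real.log (1-t))^j / (Nat.factorial j) := rfl
    rw [hr, Finset.sum_range_succ, Finset.sum_range_one]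
    norm_num [show Ix x 0 t = 1 from rfl]
  have hIx1 : Ix x 1 t = ∫ u in (0:ℝ)..t, Kiter 0 u * ((1 - u ^ x) / (1 - u)) := rfl
  rw [h2, hlog, hIx1, neg_add_eq_sub, ← intervalIntegral.integral_sub hintInv hintq]
  apply intervalIntegral.integral_congr
  intro u _
  show (1-u)⁻¹ - Kiter 0 u * ((1 - u ^ x) / (1 - u)) = u ^ x / (1 - u)
  rw [show Kiter 0 u = 1 from rfl, one_mul, inv_eq_one_div, div_sub_div_same]
  norm_num

/-- Hurwitz multiple polylogarithm Li^{(x)}_{1,…,1}(t) with m ones: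
∑_{0<m₁<⋯<m_m} t^{m_m+x}/((m₁+x)⋯(m_m+x)). -/
noncomputable def LiOnesX (x : ℝ) : ℕ → ℝ → ℝ
  | 0, _ => 1
  | (l + 1), t =>
      ∑' f : {f : Fin (l + 1) → ℕ // StrictMono f ∧ 0 < f 0},
        t ^ ((f.1 (Fin.last l) : ℝ) + x) / ∏ i, ((f.1 i : ℝ) + x)


lemma strictMono_snoc {l : ℕ} {g : Fin (l+1) → ℕ} (hg : StrictMono g) {y : ℕ}
    (hy : g (Fin.last l) < y) : StrictMono (Fin.snoc g y) := by
  intro i j hij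
  induction j using Fin.lastCases with
  | last =>
    obtain ⟨i', rfl⟩ := Fin.exists_castSucc_eq.mpr (ne_of_lt hij)
    rw [Fin.snoc_castSucc, Fin.snoc_last]
    exact lt_of_le_of_lt (hg.monotone (Fin.le_last i')) hy
  | cast j' =>
    have hne : i ≠ Fin.last (l+1) := ne_of_lt (lt_of_lt_of_le hij (Fin.castSucc_lt_last j').le)
    obtain ⟨i', rfl⟩ := Fin.exists_castSucc_eq.mpr hne
    rw [Fin.snoc_castSucc, Fin.snoc_castSucc]
    exact hg (Fin.castSucc_lt_castSucc_iff.mp hij)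

noncomputable def e1 : ℕ ≃ {f : Fin 1 → ℕ // StrictMono f ∧ 0 < f 0} where
  toFun n := ⟨fun _ => n + 1,
    fun i j hij => absurd (Subsingleton.elim i j ▸ hij) (lt_irrefl j), Nat.succ_pos n⟩
  invFun f := f.1 0 - 1
  left_inv n := by simp
  right_inv f := by
    apply Subtype.ext
    funext i
    have h0 : 0 < f.1 0 := f.2.2
    have hi : i = 0 := Subsingleton.elim i 0
    subst hi
    show f.1 0 - 1 + 1 = f.1 0
    omega

noncomputable def eS (l : ℕ) : ({f : Fin (l+1) → ℕ // StrictMono f ∧ 0 < f 0} × ℕ)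
    ≃ {f : Fin (l+2) → ℕ // StrictMono f ∧ 0 < f 0} where
  toFun p := ⟨Fin.snoc p.1.1 (p.1.1 (Fin.last l) + p.2 + 1),
    strictMono_snoc p.1.2.1 (by omega),
    by
      have h : (0 : Fin (l+2)) = Fin.castSucc (0 : Fin (l+1)) := rfl
      rw [h, Fin.snoc_castSucc]
      exact p.1.2.2⟩
  invFun f := (⟨fun i => f.1 i.castSucc,
      fun i j hij => f.2.1 (Fin.castSucc_lt_castSucc_iff.mpr hij),
      f.2.2⟩,
    f.1 (Fin.last (l+1)) - f.1 ((Fin.last l).castSucc) - 1)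
  left_inv p := by
    obtain ⟨⟨g, hg, hg0⟩, n⟩ := p
    have h1 : (fun i : Fin (l+1) =>
        Fin.snoc (α := fun _ => ℕ) g (g (Fin.last l) + n + 1) i.castSucc) = g := by
      funext i; rw [Fin.snoc_castSucc]
    refine Prod.ext ?_ ?_
    · exact Subtype.ext h1
    · show Fin.snoc (α := fun _ => ℕ) g (g (Fin.last l) + n + 1) (Fin.last (l+1))
        - Fin.snoc (α := fun _ => ℕ) g (g (Fin.last l) + n + 1) ((Fin.last l).castSucc) - 1 = n
      rw [Fin.snoc_last, Fin.snoc_castSucc]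
      omega
  right_inv f := by
    obtain ⟨f, hf, hf0⟩ := f
    apply Subtype.ext
    have hlt : f ((Fin.last l).castSucc) < f (Fin.last (l+1)) := hf (Fin.castSucc_lt_last _)
    show Fin.snoc (α := fun _ => ℕ) (fun i => f i.castSucc)
      ((fun i : Fin (l+1) => f i.castSucc) (Fin.last l)
        + (f (Fin.last (l+1)) - f ((Fin.last l).castSucc) - 1) + 1) = f
    have hval : (fun i : Fin (l+1) => f i.castSucc) (Fin.last l)
        + (f (Fin.last (l+1)) - f ((Fin.last l).castSucc) - 1) + 1 = f (Fin.last (l+1)) := by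
      simp only []
      omega
    rw [hval]
    exact Fin.snoc_init_self f

lemma term_e1 (x t : ℝ) (n : ℕ) :
    t ^ (((e1 n).1 (Fin.last 0) : ℝ) + x) / ∏ i, (((e1 n).1 i : ℝ) + x)
      = t ^ ((n:ℝ) + 1 + x) / ((n:ℝ) + 1 + x) := by
  show t ^ (((n+1 : ℕ):ℝ) + x) / ∏ _i : Fin 1, (((n+1 : ℕ):ℝ) + x) = _
  rw [Fin.prod_univ_one]
  push_cast
  rfl

lemma term_eS (x t : ℝ) (l : ℕ) (g : {f : Fin (l+1) → ℕ // StrictMono f ∧ 0 < f 0}) (n : ℕ) :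
    t ^ (((eS l (g, n)).1 (Fin.last (l+1)) : ℝ) + x) / ∏ i, (((eS l (g,n)).1 i : ℝ) + x)
      = t ^ (((g.1 (Fin.last l) : ℝ) + (n:ℝ) + 1) + x)
        / ((∏ i, ((g.1 i : ℝ) + x)) * (((g.1 (Fin.last l) : ℝ) + (n:ℝ) + 1) + x)) := by
  have h1 : (eS l (g,n)).1 (Fin.last (l+1)) = g.1 (Fin.last l) + n + 1 := by
    show Fin.snoc (α := fun _ => ℕ) g.1 (g.1 (Fin.last l) + n + 1) (Fin.last (l+1)) = _
    rw [Fin.snoc_last]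
  have h2 : ∀ i : Fin (l+1), (eS l (g,n)).1 i.castSucc = g.1 i := by
    intro i
    show Fin.snoc (α := fun _ => ℕ) g.1 (g.1 (Fin.last l) + n + 1) i.castSucc = _
    rw [Fin.snoc_castSucc]
  have h3 : (∏ i, (((eS l (g,n)).1 i : ℝ) + x))
      = (∏ i, ((g.1 i : ℝ) + x)) * (((g.1 (Fin.last l) + n + 1 : ℕ) : ℝ) + x) := by
    rw [Fin.prod_univ_castSucc]
    congr 1
    · exact Finset.prod_congr rfl (fun i _ => by rw [h2 i])
    · rw [h1]
  rw [h1, h3]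
  push_cast
  rfl

lemma entry_pos (hx1 : -1 < x) {k : ℕ} (f : {f : Fin (k+1) → ℕ // StrictMono f ∧ 0 < f 0})
    (i : Fin (k+1)) : 0 < (f.1 i : ℝ) + x := by
  have h1 : 1 ≤ f.1 i := le_trans f.2.2 (f.2.1.monotone (Fin.zero_le i))
  have h2 : (1:ℝ) ≤ (f.1 i : ℝ) := by exact_mod_cast h1
  linarith

lemma prodx_pos (hx1 : -1 < x) {k : ℕ} (f : {f : Fin (k+1) → ℕ // StrictMono f ∧ 0 < f 0}) :
    0 < ∏ i, ((f.1 i : ℝ) + x) :=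
  Finset.prod_pos (fun i _ => entry_pos hx1 f i)

lemma summable_A (hx1 : -1 < x) {t : ℝ} (ht0 : 0 < t) (ht1 : t < 1) : ∀ l : ℕ,
    Summable (fun f : {f : Fin (l+1) → ℕ // StrictMono f ∧ 0 < f 0} =>
      t ^ ((f.1 (Fin.last l) : ℝ) + x) / ∏ i, ((f.1 i : ℝ) + x)) := by
  intro l
  induction l with
  | zero =>
    rw [← e1.summable_iff]
    have hcomp : ((fun f : {f : Fin 1 → ℕ // StrictMono f ∧ 0 < f 0} =>
        t ^ ((f.1 (Fin.last 0) : ℝ) + x) / ∏ i, ((f.1 i : ℝ) + x)) ∘ e1)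
        = fun n : ℕ => t ^ ((n:ℝ) + 1 + x) / ((n:ℝ) + 1 + x) := funext (fun n => term_e1 x t n)
    rw [hcomp]
    apply Summable.of_norm_bounded (g := fun n : ℕ => (t ^ (1+x) / (1+x)) * t ^ n)
      ((summable_geometric_of_lt_one ht0.le ht1).mul_left _)
    · intro n
      have hd : (0:ℝ) < (n:ℝ) + 1 + x := by
        have := Nat.cast_nonneg (α := ℝ) n; linarith
      have h1x : (0:ℝ) < 1 + x := by linarith
      rw [Real.norm_eq_abs, abs_of_nonneg (div_nonneg (Real.rpow_nonneg ht0.le _) hd.le)]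
      have hnum : t ^ ((n:ℝ) + 1 + x) = t ^ n * t ^ (1+x) := by
        rw [show (n:ℝ) + 1 + x = (n:ℝ) + (1+x) by ring, Real.rpow_add ht0, Real.rpow_natCast]
      rw [hnum]
      calc t ^ n * t ^ (1+x) / ((n:ℝ) + 1 + x) ≤ t ^ n * t ^ (1+x) / (1+x) := by
            apply div_le_div_of_nonneg_left _ h1x (by linarith)
            positivity
        _ = t ^ (1+x) / (1+x) * t ^ n := by ring
  | succ l ih =>
    rw [← (eS l).summable_iff]
    have hcomp : ((fun f : {f : Fin (l+2) → ℕ // StrictMono f ∧ 0 < f 0} =>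
        t ^ ((f.1 (Fin.last (l+1)) : ℝ) + x) / ∏ i, ((f.1 i : ℝ) + x)) ∘ (eS l))
        = fun p : {f : Fin (l+1) → ℕ // StrictMono f ∧ 0 < f 0} × ℕ =>
          t ^ (((p.1.1 (Fin.last l) : ℝ) + (p.2:ℝ) + 1) + x)
          / ((∏ i, ((p.1.1 i : ℝ) + x)) * (((p.1.1 (Fin.last l) : ℝ) + (p.2:ℝ) + 1) + x)) := by
      funext p
      obtain ⟨g, n⟩ := p
      exact term_eS x t l g n
    rw [hcomp]
    have hsum2 : Summable (fun p : {f : Fin (l+1) → ℕ // StrictMono f ∧ 0 < f 0} × ℕ =>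
        (t ^ ((p.1.1 (Fin.last l) : ℝ) + x) / ∏ i, ((p.1.1 i : ℝ) + x)) * (t * t ^ p.2)) := by
      apply Summable.mul_of_nonneg ih ((summable_geometric_of_lt_one ht0.le ht1).mul_left t)
      · intro g; exact div_nonneg (Real.rpow_nonneg ht0.le _) (prodx_pos hx1 g).le
      · intro n; exact mul_nonneg ht0.le (pow_nonneg ht0.le n)
    apply Summable.of_norm_bounded hsum2
    · intro p
      have hGn : (1:ℝ) ≤ (p.1.1 (Fin.last l) : ℝ) := by
        exact_mod_cast le_trans p.1.2.2 (p.1.2.1.monotone (Fin.zero_le _))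
      have hdpos : (0:ℝ) < ((p.1.1 (Fin.last l) : ℝ) + (p.2:ℝ) + 1) + x := by
        have : (0:ℝ) ≤ (p.2:ℝ) := Nat.cast_nonneg _
        linarith
      rw [Real.norm_eq_abs, abs_of_nonneg (div_nonneg (Real.rpow_nonneg ht0.le _)
        (mul_nonneg (prodx_pos hx1 p.1).le hdpos.le))]
      set G := (p.1.1 (Fin.last l) : ℝ) with hGdef
      have hG : (1:ℝ) ≤ G := by
        rw [hGdef]
        exact_mod_cast le_trans p.1.2.2 (p.1.2.1.monotone (Fin.zero_le _))
      have hP : (0:ℝ) < ∏ i, ((p.1.1 i : ℝ) + x) := prodx_pos hx1 p.1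
      have hfac : (1:ℝ) ≤ (G + (p.2:ℝ) + 1) + x := by
        have : (0:ℝ) ≤ (p.2:ℝ) := Nat.cast_nonneg _
        linarith
      have hnum : t ^ ((G + (p.2:ℝ) + 1) + x) = t ^ (G + x) * (t * t ^ p.2) := by
        rw [show (G + (p.2:ℝ) + 1) + x = (G + x) + ((p.2:ℝ) + 1) by ring, Real.rpow_add ht0,
          show t ^ ((p.2:ℝ) + 1) = t * t ^ p.2 by
            rw [Real.rpow_add ht0, Real.rpow_one, Real.rpow_natCast]; ring]
      rw [hnum]
      calc t ^ (G + x) * (t * t ^ p.2) / ((∏ i, ((p.1.1 i : ℝ) + x)) * ((G + (p.2:ℝ) + 1) + x))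
          ≤ t ^ (G + x) * (t * t ^ p.2) / ((∏ i, ((p.1.1 i : ℝ) + x)) * 1) := by
            apply div_le_div_of_nonneg_left _ (by linarith) _
            · positivity
            · have := hP
              nlinarith
        _ = (t ^ (G + x) / ∏ i, ((p.1.1 i : ℝ) + x)) * (t * t ^ p.2) := by
            rw [mul_one]; ring

lemma Li_one (hx1 : -1 < x) {t : ℝ} (ht0 : 0 < t) (ht1 : t < 1) :
    LiOnesX x 1 t = ∫ u in (0:ℝ)..t, u ^ x / (1 - u) := by
  have hLi : LiOnesX x 1 t = ∑' n : ℕ, t ^ ((n:ℝ) + 1 + x) / ((n:ℝ) + 1 + x) := by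
    have h0 : LiOnesX x 1 t = ∑' f : {f : Fin 1 → ℕ // StrictMono f ∧ 0 < f 0},
        t ^ ((f.1 (Fin.last 0) : ℝ) + x) / ∏ i, ((f.1 i : ℝ) + x) := rfl
    rw [h0, ← Equiv.tsum_eq e1]
    exact tsum_congr (fun n => term_e1 x t n)
  have hF : ∀ n : ℕ, IntegrableOn (fun u : ℝ => u ^ x * u ^ n) (Ioc 0 t) volume := by
    intro n
    have h := (intervalIntegral.intervalIntegrable_rpow' (a := 0) (b := t)
      hx1).mul_continuousOn ((continuous_pow n).continuousOn)
    rwa [intervalIntegrable_iff_integrableOn_Ioc_of_le ht0.le] at h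
  have hInt : ∀ n : ℕ, (∫ u in Ioc 0 t, (u ^ x * u ^ n))
      = t ^ ((n:ℝ) + 1 + x) / ((n:ℝ) + 1 + x) := by
    intro n
    have h1 : ∀ u ∈ Ioc (0:ℝ) t, u ^ x * u ^ n = u ^ (x + n) := by
      intro u hu
      rw [← Real.rpow_natCast u n, ← Real.rpow_add hu.1]
    rw [MeasureTheory.setIntegral_congr_fun measurableSet_Ioc h1,
      ← intervalIntegral.integral_of_le ht0.le,
      integral_rpow (Or.inl (by push_cast; linarith [Nat.cast_nonneg (α := ℝ) n] : (-1:ℝ) < x + n)),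
      Real.zero_rpow (by push_cast; linarith [Nat.cast_nonneg (α := ℝ) n] : x + (n:ℝ) + 1 ≠ 0),
      show x + (n:ℝ) + 1 = (n:ℝ) + 1 + x by ring]
    ring
  have hnorm : ∀ n : ℕ, (∫ u in Ioc 0 t, ‖u ^ x * u ^ n‖)
      = t ^ ((n:ℝ) + 1 + x) / ((n:ℝ) + 1 + x) := by
    intro n
    rw [← hInt n]
    apply MeasureTheory.setIntegral_congr_fun measurableSet_Ioc
    intro u hu
    show ‖u ^ x * u ^ n‖ = u ^ x * u ^ n
    rw [Real.norm_eq_abs, abs_of_nonneg (mul_nonneg (Real.rpow_nonneg hu.1.le x)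
      (pow_nonneg hu.1.le n))]
  have hsumnorm : Summable (fun n : ℕ => ∫ u in Ioc 0 t, ‖u ^ x * u ^ n‖) := by
    have h1 := (Equiv.summable_iff e1).mpr (summable_A hx1 ht0 ht1 0)
    apply Summable.congr h1
    intro n
    exact (term_e1 x t n).trans (hnorm n).symm
  have hsw := MeasureTheory.integral_tsum_of_summable_integral_norm
    (μ := volume.restrict (Ioc 0 t)) (F := fun (n : ℕ) (u : ℝ) => u ^ x * u ^ n) hF hsumnorm
  have hpt : ∀ u ∈ Ioc (0:ℝ) t, u ^ x / (1 - u) = ∑' n : ℕ, u ^ x * u ^ n := by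
    intro u hu
    rw [tsum_mul_left, tsum_geometric_of_lt_one hu.1.le (lt_of_le_of_lt hu.2 ht1),
      div_eq_mul_inv]
  rw [hLi, intervalIntegral.integral_of_le ht0.le,
    MeasureTheory.setIntegral_congr_fun measurableSet_Ioc hpt, ← hsw]
  exact tsum_congr (fun n => (hInt n).symm)

set_option maxHeartbeats 1000000 in
lemma Li_rec (hx1 : -1 < x) (l : ℕ) {t : ℝ} (ht0 : 0 < t) (ht1 : t < 1) :
    LiOnesX x (l+2) t = ∫ u in (0:ℝ)..t, LiOnesX x (l+1) u / (1 - u) := by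
  set S := {f : Fin (l+1) → ℕ // StrictMono f ∧ 0 < f 0} with hS
  set F : S × ℕ → ℝ → ℝ := fun p u =>
    (u ^ ((p.1.1 (Fin.last l) : ℝ) + x) / ∏ i, ((p.1.1 i : ℝ) + x)) * u ^ p.2 with hFdef
  have hGpos : ∀ p : S × ℕ, (0:ℝ) < (p.1.1 (Fin.last l) : ℝ) + x := fun p => entry_pos hx1 p.1 _
  have hF : ∀ p : S × ℕ, IntegrableOn (F p) (Ioc 0 t) volume := by
    intro p
    have hcont : Continuous (F p) := by
      apply Continuous.mul _ (continuous_pow p.2)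
      apply Continuous.div_const
      rw [continuous_iff_continuousAt]
      intro u
      exact Real.continuousAt_rpow_const u _ (Or.inr (hGpos p).le)
    have h := (hcont.intervalIntegrable (μ := volume) 0 t)
    rwa [intervalIntegrable_iff_integrableOn_Ioc_of_le ht0.le] at h
  have hInt : ∀ p : S × ℕ, (∫ u in Ioc 0 t, F p u)
      = t ^ (((p.1.1 (Fin.last l) : ℝ) + (p.2:ℝ) + 1) + x)
        / ((∏ i, ((p.1.1 i : ℝ) + x)) * (((p.1.1 (Fin.last l) : ℝ) + (p.2:ℝ) + 1) + x)) := by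
    intro p
    have h1 : ∀ u ∈ Ioc (0:ℝ) t, F p u
        = (∏ i, ((p.1.1 i : ℝ) + x))⁻¹ * u ^ (((p.1.1 (Fin.last l) : ℝ) + x) + p.2) := by
      intro u hu
      show (u ^ ((p.1.1 (Fin.last l) : ℝ) + x) / ∏ i, ((p.1.1 i : ℝ) + x)) * u ^ p.2 = _
      rw [← Real.rpow_natCast u p.2, div_mul_eq_mul_div, ← Real.rpow_add hu.1]
      ring
    have hexp : (0:ℝ) ≤ ((p.1.1 (Fin.last l) : ℝ) + x) + (p.2:ℝ) := by
      have := hGpos p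
      have h2 : (0:ℝ) ≤ (p.2:ℝ) := Nat.cast_nonneg _
      linarith
    rw [MeasureTheory.setIntegral_congr_fun measurableSet_Ioc h1,
      MeasureTheory.integral_const_mul _ _, ← intervalIntegral.integral_of_le ht0.le,
      integral_rpow (Or.inl (by linarith : (-1:ℝ) < ((p.1.1 (Fin.last l) : ℝ) + x) + (p.2:ℝ))),
      Real.zero_rpow (by linarith : ((p.1.1 (Fin.last l) : ℝ) + x) + (p.2:ℝ) + 1 ≠ 0),
      show ((p.1.1 (Fin.last l) : ℝ) + x) + (p.2:ℝ) + 1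
        = ((p.1.1 (Fin.last l) : ℝ) + (p.2:ℝ) + 1) + x by ring]
    rw [sub_zero]
    field_simp
  have hnorm : ∀ p : S × ℕ, (∫ u in Ioc 0 t, ‖F p u‖) = ∫ u in Ioc 0 t, F p u := by
    intro p
    apply MeasureTheory.setIntegral_congr_fun measurableSet_Ioc
    intro u hu
    show ‖F p u‖ = F p u
    rw [Real.norm_eq_abs]
    apply abs_of_nonneg
    apply mul_nonneg (div_nonneg (Real.rpow_nonneg hu.1.le _) (prodx_pos hx1 p.1).le)
      (pow_nonneg hu.1.le _)
  have hsumnorm : Summable (fun p : S × ℕ => ∫ u in Ioc 0 t, ‖F p u‖) := by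
    have h1 := (Equiv.summable_iff (eS l)).mpr (summable_A hx1 ht0 ht1 (l+1))
    apply Summable.congr h1
    intro p
    obtain ⟨g, n⟩ := p
    exact (term_eS x t l g n).trans ((hnorm (g,n)).trans (hInt (g,n))).symm
  have hsw := MeasureTheory.integral_tsum_of_summable_integral_norm
    (μ := volume.restrict (Ioc 0 t)) (F := F) hF hsumnorm
  have hpt : ∀ u ∈ Ioc (0:ℝ) t, LiOnesX x (l+1) u / (1 - u) = ∑' p : S × ℕ, F p u := by
    intro u hu
    have hu0 : 0 < u := hu.1
    have hu1 : u < 1 := lt_of_le_of_lt hu.2 ht1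
    have hsumA := summable_A hx1 hu0 hu1 l
    have hsumP : Summable (fun p : S × ℕ => F p u) := by
      have h := Summable.mul_of_nonneg
        (f := fun g : S => u ^ ((g.1 (Fin.last l) : ℝ) + x) / ∏ i, ((g.1 i : ℝ) + x))
        (g := fun n : ℕ => u ^ n) hsumA (summable_geometric_of_lt_one hu0.le hu1)
        (fun g => div_nonneg (Real.rpow_nonneg hu0.le _) (prodx_pos hx1 g).le)
        (fun n => pow_nonneg hu0.le n)
      exact h
    calc LiOnesX x (l+1) u / (1-u)
        = (∑' g : S, u ^ ((g.1 (Fin.last l) : ℝ) + x) / ∏ i, ((g.1 i : ℝ) + x)) * (1-u)⁻¹ := by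
          rw [div_eq_mul_inv]; rfl
      _ = ∑' g : S, (u ^ ((g.1 (Fin.last l) : ℝ) + x) / ∏ i, ((g.1 i : ℝ) + x)) * (1-u)⁻¹ :=
          tsum_mul_right.symm
      _ = ∑' (g : S) (n : ℕ), F (g, n) u := by
          apply tsum_congr
          intro g
          have hfg : (fun n : ℕ => F (g,n) u) = fun n : ℕ =>
              (u ^ ((g.1 (Fin.last l) : ℝ) + x) / ∏ i, ((g.1 i : ℝ) + x)) * u ^ n := rfl
          rw [hfg, tsum_mul_left, tsum_geometric_of_lt_one hu0.le hu1]
      _ = ∑' p : S × ℕ, F p u := (Summable.tsum_prod' hsumP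
          (fun g => by
            have hfg : (fun n : ℕ => F (g,n) u) = fun n : ℕ =>
                (u ^ ((g.1 (Fin.last l) : ℝ) + x) / ∏ i, ((g.1 i : ℝ) + x)) * u ^ n := rfl
            rw [hfg]
            exact (summable_geometric_of_lt_one hu0.le hu1).mul_left _)).symm
  have hL2 : LiOnesX x (l+2) t = ∑' f : {f : Fin (l+2) → ℕ // StrictMono f ∧ 0 < f 0},
      t ^ ((f.1 (Fin.last (l+1)) : ℝ) + x) / ∏ i, ((f.1 i : ℝ) + x) := rfl
  rw [hL2, ← Equiv.tsum_eq (eS l), intervalIntegral.integral_of_le ht0.le,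
    MeasureTheory.setIntegral_congr_fun measurableSet_Ioc hpt, ← hsw]
  apply tsum_congr
  intro p
  obtain ⟨g, n⟩ := p
  exact (term_eS x t l g n).trans (hInt (g,n)).symm

/-- Li^{(x)}_{1,…,1}(t) (m ones) = ∑_{j=0}^m (−1)^{m−j} I_{m−j}(t) (−log(1−t))^j/j!. -/
theorem stmt10 (m : ℕ) (hm : 1 ≤ m) (x : ℝ) (hx : |x| < 1)
    (t : ℝ) (ht0 : 0 < t) (ht1 : t < 1) :
    LiOnesX x m t
      = ∑ j ∈ Finset.range (m + 1),
          (-1 : ℝ) ^ (m - j) * Ix x (m - j) t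
            * (-Real.log (1 - t)) ^ j / (Nat.factorial j) := by
  have hx1 : -1 < x := neg_lt_of_abs_lt hx
  have key : ∀ k : ℕ, 1 ≤ k → ∀ s : ℝ, 0 < s → s < 1 → LiOnesX x k s = RHSf x k s := by
    intro k hk
    induction k, hk using Nat.le_induction with
    | base =>
      intro s hs0 hs1
      rw [Li_one hx1 hs0 hs1, RHSf_one hx1 hs0.le hs1]
    | succ k hk ih =>
      intro s hs0 hs1
      obtain ⟨l, rfl⟩ : ∃ l, k = l + 1 := ⟨k - 1, by omega⟩
      rw [show l + 1 + 1 = l + 2 from rfl, Li_rec hx1 l hs0 hs1,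
        RHSf_rec hx1 (l+1) (by omega) hs0.le hs1,
        intervalIntegral.integral_of_le hs0.le, intervalIntegral.integral_of_le hs0.le]
      apply MeasureTheory.setIntegral_congr_fun measurableSet_Ioc
      intro u hu
      show LiOnesX x (l+1) u / (1 - u) = RHSf x (l+1) u / (1 - u)
      rw [ih u hu.1 (lt_of_le_of_lt hu.2 hs1)]
  exact key m hm t ht0 ht1
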